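/- For every n ∈ ℕ, the q-Volkenborn integral of the Gaussian binomial coefficient is ∫_{ℤ_p} binom(x,n)_q dμ_q(x) = (−1)^n q^{n−C(n+1,2)} / [n+1]_q; precisely, the sequence N ↦ (1/[p^N]_q) Σ_{x=0}^{p^N−1} q^x binom(x,n)_q converges in ℚ_p to (−1)^n q^n q^{−C(n+1,2)} / [n+1]_q as N → ∞. (Equation (13), with the exponent of q corrected so that the case n = 1 gives ∫ [x]_q dμ_q = −1/[2]_q.) -/

import Mathlib

/-- The q-analogue `[n]_q = (1 - q^n)/(1 - q)` of a natural number. -/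
def qnum {K : Type*} [Field K] (q : K) (n : ℕ) : K := (1 - q ^ n) / (1 - q)

/-- The q-factorial `[n]_q! = ∏_{j=1}^n [j]_q`. -/
def qfact {K : Type*} [Field K] (q : K) (n : ℕ) : K :=
  ∏ j ∈ Finset.range n, qnum q (j + 1)

/-- The Gaussian binomial coefficient, `0` for `k > n`. -/
def qbinom {K : Type*} [Field K] (q : K) (n k : ℕ) : K :=
  if k ≤ n then qfact q n / (qfact q k * qfact q (n - k)) else 0

open Finset

section NormLemmas
variable {p : ℕ} [Fact p.Prime]

lemma my_norm_sum_le {ι : Type*} (s : Finset ι) (f : ι → ℤ_[p]) {d : ℝ} (hd : 0 ≤ d)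
    (h : ∀ i ∈ s, ‖f i‖ ≤ d) : ‖∑ i ∈ s, f i‖ ≤ d := by
  classical
  induction s using Finset.cons_induction with
  | empty => simpa using hd
  | cons a s' ha ih =>
    rw [Finset.sum_cons]
    refine le_trans (PadicInt.nonarchimedean _ _) (max_le (h a (mem_cons_self _ _)) ?_)
    exact ih fun i hi => h i (mem_cons_of_mem hi)

lemma geom_sub_nat (x : ℤ_[p]) (i : ℕ) :
    ‖(∑ j ∈ range i, x ^ j) - (i : ℤ_[p])‖ ≤ ‖x - 1‖ := by
  have h1 : (∑ j ∈ range i, x ^ j) - (i : ℤ_[p]) = ∑ j ∈ range i, (x ^ j - 1) := by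
    rw [Finset.sum_sub_distrib]
    simp
  rw [h1]
  refine my_norm_sum_le _ _ (norm_nonneg _) fun j _ => ?_
  rw [← mul_geom_sum, norm_mul]
  calc ‖x - 1‖ * ‖∑ i ∈ range j, x ^ i‖ ≤ ‖x - 1‖ * 1 :=
        mul_le_mul_of_nonneg_left (PadicInt.norm_le_one _) (norm_nonneg _)
    _ = ‖x - 1‖ := mul_one _

lemma norm_pow_p_sub_one (x : ℤ_[p])
    (hb2 : ‖x - 1‖ * ‖((p * (p - 1) / 2 : ℕ) : ℤ_[p])‖ < (p : ℝ)⁻¹)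
    (hb3 : ‖x - 1‖ * ‖x - 1‖ < (p : ℝ)⁻¹) :
    ‖x ^ p - 1‖ = ‖x - 1‖ * (p : ℝ)⁻¹ := by
  set S : ℤ_[p] := ∑ i ∈ range p, x ^ i with hSdef
  set E : ℤ_[p] := ∑ i ∈ range p, ((∑ j ∈ range i, x ^ j) - (i : ℤ_[p])) with hEdef
  have hE : ‖E‖ ≤ ‖x - 1‖ :=
    my_norm_sum_le _ _ (norm_nonneg _) fun i _ => geom_sub_nat x i
  have hT : ∑ i ∈ range p, (i : ℤ_[p]) = ((p * (p - 1) / 2 : ℕ) : ℤ_[p]) := by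
    rw [← Nat.cast_sum]
    norm_cast
    rw [Finset.sum_range_id]
  have hSp : S - (p : ℤ_[p]) = (x - 1) * (E + ((p * (p - 1) / 2 : ℕ) : ℤ_[p])) := by
    have h1 : S - (p : ℤ_[p]) = ∑ i ∈ range p, (x ^ i - 1) := by
      rw [Finset.sum_sub_distrib]
      simp
      exact hSdef
    have h2 : ∀ i, x ^ i - 1 = (x - 1) * ((∑ j ∈ range i, x ^ j) - (i : ℤ_[p])) + (x-1) * (i : ℤ_[p]) := by
      intro i
      rw [← mul_add, sub_add_cancel, mul_geom_sum]
    rw [h1]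
    calc ∑ i ∈ range p, (x ^ i - 1)
        = ∑ i ∈ range p, ((x - 1) * ((∑ j ∈ range i, x ^ j) - (i : ℤ_[p])) + (x-1) * (i : ℤ_[p])) := by
          exact Finset.sum_congr rfl fun i _ => h2 i
      _ = (x - 1) * E + (x - 1) * ∑ i ∈ range p, (i : ℤ_[p]) := by
          rw [Finset.sum_add_distrib, ← Finset.mul_sum, ← Finset.mul_sum]
      _ = (x - 1) * (E + ((p * (p - 1) / 2 : ℕ) : ℤ_[p])) := by rw [hT, mul_add]
  have hnormSp : ‖S - (p : ℤ_[p])‖ < (p : ℝ)⁻¹ := by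
    rw [hSp, norm_mul]
    refine lt_of_le_of_lt (mul_le_mul_of_nonneg_left (PadicInt.nonarchimedean _ _) (norm_nonneg _)) ?_
    rcases max_cases ‖E‖ ‖((p * (p - 1) / 2 : ℕ) : ℤ_[p])‖ with ⟨he, _⟩ | ⟨he, _⟩
    · rw [he]
      exact lt_of_le_of_lt (mul_le_mul_of_nonneg_left hE (norm_nonneg _)) hb3
    · rw [he]; exact hb2
  have hnormS : ‖S‖ = (p : ℝ)⁻¹ := by
    have h1 : S = (p : ℤ_[p]) + (S - (p : ℤ_[p])) := by ring
    have hne : ‖(p : ℤ_[p])‖ ≠ ‖S - (p : ℤ_[p])‖ := by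
      rw [PadicInt.norm_p]; exact (ne_of_lt hnormSp).symm
    rw [h1, PadicInt.norm_add_eq_max_of_ne hne, PadicInt.norm_p]
    rw [PadicInt.norm_p] at hne
    exact max_eq_left (le_of_lt hnormSp)
  rw [← mul_geom_sum, norm_mul, hnormS]

lemma norm_pow_pN (x : ℤ_[p])
    (hb2 : ‖x - 1‖ * ‖((p * (p - 1) / 2 : ℕ) : ℤ_[p])‖ < (p : ℝ)⁻¹)
    (hb3 : ‖x - 1‖ * ‖x - 1‖ < (p : ℝ)⁻¹) :
    ∀ N : ℕ, ‖x ^ p ^ N - 1‖ = ‖x - 1‖ * ((p : ℝ)⁻¹) ^ N := by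
  have hp1 : (1 : ℝ) ≤ (p : ℝ) := by exact_mod_cast (Fact.out : p.Prime).one_lt.le
  have hpinv1 : (p : ℝ)⁻¹ ≤ 1 := by
    rw [inv_le_one_iff₀]; right; exact hp1
  have hpinv0 : (0 : ℝ) ≤ (p : ℝ)⁻¹ := by positivity
  intro N
  induction N with
  | zero => simp
  | succ N ih =>
    have hle : ‖x ^ p ^ N - 1‖ ≤ ‖x - 1‖ := by
      rw [ih]
      calc ‖x - 1‖ * ((p:ℝ)⁻¹) ^ N ≤ ‖x - 1‖ * 1 :=
        mul_le_mul_of_nonneg_left (pow_le_one₀ hpinv0 hpinv1) (norm_nonneg _)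
      _ = ‖x - 1‖ := mul_one _
    have hb2' : ‖x ^ p ^ N - 1‖ * ‖((p * (p - 1) / 2 : ℕ) : ℤ_[p])‖ < (p : ℝ)⁻¹ :=
      lt_of_le_of_lt (mul_le_mul_of_nonneg_right hle (norm_nonneg _)) hb2
    have hb3' : ‖x ^ p ^ N - 1‖ * ‖x ^ p ^ N - 1‖ < (p : ℝ)⁻¹ :=
      lt_of_le_of_lt (mul_le_mul hle hle (norm_nonneg _) (norm_nonneg _)) hb3
    have hstep := norm_pow_p_sub_one (x ^ p ^ N) hb2' hb3'
    have hxp : (x ^ p ^ N) ^ p = x ^ p ^ (N + 1) := by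
      rw [← pow_mul, ← pow_succ]
    rw [hxp] at hstep
    rw [hstep, ih, pow_succ]
    ring

lemma norm_nat_coprime {u : ℕ} (hu : ¬ p ∣ u) : ‖(u : ℤ_[p])‖ = 1 := by
  have h2 : ¬ ((p : ℤ) ∣ (u : ℤ)) := by exact_mod_cast hu
  have hnl := (PadicInt.norm_int_lt_one_iff_dvd (p := p) (u : ℤ)).not.mpr h2
  have hle : ‖((u : ℤ) : ℤ_[p])‖ ≤ 1 := PadicInt.norm_le_one _
  push_cast at hnl hle
  linarith [lt_or_ge ‖((u : ℕ) : ℤ_[p])‖ 1]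

lemma norm_pow_coprime (x : ℤ_[p]) (hd : ‖x - 1‖ < 1) {u : ℕ} (hu : ¬ p ∣ u) :
    ‖x ^ u - 1‖ = ‖x - 1‖ := by
  have hu1 : ‖((u : ℕ) : ℤ_[p])‖ = 1 := norm_nat_coprime hu
  have hlt : ‖(∑ j ∈ range u, x ^ j) - (u : ℤ_[p])‖ < 1 :=
    lt_of_le_of_lt (geom_sub_nat x u) hd
  have hne : ‖(u : ℤ_[p])‖ ≠ ‖(∑ j ∈ range u, x ^ j) - (u : ℤ_[p])‖ := by
    rw [hu1]; exact (ne_of_lt hlt).symm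
  have hS : ‖∑ j ∈ range u, x ^ j‖ = 1 := by
    have h1 : (∑ j ∈ range u, x ^ j) = (u : ℤ_[p]) + ((∑ j ∈ range u, x ^ j) - (u : ℤ_[p])) := by
      ring
    rw [h1, PadicInt.norm_add_eq_max_of_ne hne, hu1]
    rw [hu1] at hne
    exact max_eq_left (le_of_lt hlt)
  rw [← mul_geom_sum, norm_mul, hS, mul_one]

lemma bounds_of_hq (q : ℤ_[p]) (hq : ‖q - 1‖ < (p : ℝ) ^ (-(1 : ℝ) / ((p : ℝ) - 1))) :
    ‖q - 1‖ < 1 ∧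
    ‖q - 1‖ * ‖((p * (p - 1) / 2 : ℕ) : ℤ_[p])‖ < (p : ℝ)⁻¹ ∧
    ‖q - 1‖ * ‖q - 1‖ < (p : ℝ)⁻¹ := by
  have hp1 : (1 : ℝ) < (p : ℝ) := by exact_mod_cast (Fact.out : p.Prime).one_lt
  have hpinv0 : (0 : ℝ) < (p : ℝ)⁻¹ := by positivity
  have hpinv1 : (p : ℝ)⁻¹ < 1 := by
    rw [inv_lt_one_iff₀]; right; exact hp1
  have hexp : -(1 : ℝ) / ((p : ℝ) - 1) < 0 := by
    apply div_neg_of_neg_of_pos <;> linarith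
  have hlt1 : ‖q - 1‖ < 1 :=
    lt_trans hq (Real.rpow_lt_one_of_one_lt_of_neg hp1 hexp)
  have hd1 : ‖q - 1‖ ≤ (p : ℝ)⁻¹ := by
    have h0 : ‖q - 1‖ < (p : ℝ) ^ (0 : ℤ) := by simpa using hlt1
    have := (PadicInt.norm_lt_pow_iff_norm_le_pow_sub_one (q - 1) 0).mp h0
    simpa using this
  refine ⟨hlt1, ?_, ?_⟩
  · by_cases hp2 : p = 2
    · subst hp2
      have hT : ((2 * (2 - 1) / 2 : ℕ) : ℤ_[2]) = 1 := by norm_num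
      rw [hT, norm_one, mul_one]
      have he : (-(1 : ℝ) / (((2 : ℕ) : ℝ) - 1)) = -1 := by norm_num
      rw [he, Real.rpow_neg_one] at hq
      exact_mod_cast hq
    · have hodd : 2 ∣ p - 1 := by
        have := (Fact.out : p.Prime).two_le
        rcases Nat.Prime.eq_two_or_odd' (Fact.out : p.Prime) with h | h
        · exact absurd h hp2
        · obtain ⟨c, hc⟩ := h
          omega
      have hTfac : p * (p - 1) / 2 = p * ((p - 1) / 2) := Nat.mul_div_assoc p hodd
      have hTnorm : ‖((p * (p - 1) / 2 : ℕ) : ℤ_[p])‖ ≤ (p : ℝ)⁻¹ := by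
        rw [hTfac]
        push_cast
        rw [norm_mul, PadicInt.norm_p]
        calc (p : ℝ)⁻¹ * ‖(((p - 1) / 2 : ℕ) : ℤ_[p])‖ ≤ (p : ℝ)⁻¹ * 1 :=
          mul_le_mul_of_nonneg_left (PadicInt.norm_le_one _) (le_of_lt hpinv0)
        _ = (p : ℝ)⁻¹ := mul_one _
      calc ‖q - 1‖ * ‖((p * (p - 1) / 2 : ℕ) : ℤ_[p])‖ ≤ (p : ℝ)⁻¹ * (p : ℝ)⁻¹ :=
            mul_le_mul hd1 hTnorm (norm_nonneg _) (le_of_lt hpinv0)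
        _ < 1 * (p : ℝ)⁻¹ := by nlinarith
        _ = (p : ℝ)⁻¹ := one_mul _
  · calc ‖q - 1‖ * ‖q - 1‖ ≤ (p : ℝ)⁻¹ * (p : ℝ)⁻¹ :=
        mul_le_mul hd1 hd1 (norm_nonneg _) (le_of_lt hpinv0)
    _ < 1 * (p : ℝ)⁻¹ := by nlinarith
    _ = (p : ℝ)⁻¹ := one_mul _

lemma q_pow_ne_one (q : ℤ_[p]) (hq1 : q ≠ 1)
    (hq : ‖q - 1‖ < (p : ℝ) ^ (-(1 : ℝ) / ((p : ℝ) - 1))) {m : ℕ} (hm : 1 ≤ m) :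
    q ^ m ≠ 1 := by
  obtain ⟨hlt1, hb2, hb3⟩ := bounds_of_hq q hq
  have hd0 : 0 < ‖q - 1‖ := norm_pos_iff.mpr (sub_ne_zero.mpr hq1)
  set k := m.factorization p with hk
  have hm0 : m ≠ 0 := by omega
  have hfac : p ^ k * (m / p ^ k) = m := Nat.ordProj_mul_ordCompl_eq_self m p
  have hu : ¬ p ∣ (m / p ^ k) := Nat.not_dvd_ordCompl (Fact.out : p.Prime) hm0
  set u := m / p ^ k with hudef
  have hyn : ‖q ^ u - 1‖ = ‖q - 1‖ := norm_pow_coprime q hlt1 hu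
  have hb2' : ‖q ^ u - 1‖ * ‖((p * (p - 1) / 2 : ℕ) : ℤ_[p])‖ < (p : ℝ)⁻¹ := by rw [hyn]; exact hb2
  have hb3' : ‖q ^ u - 1‖ * ‖q ^ u - 1‖ < (p : ℝ)⁻¹ := by rw [hyn]; exact hb3
  have hfinal := norm_pow_pN (q ^ u) hb2' hb3' k
  rw [hyn] at hfinal
  have hqm : (q ^ u) ^ p ^ k = q ^ m := by
    rw [← pow_mul, mul_comm, hfac]
  rw [hqm] at hfinal
  have hpos : 0 < ‖q ^ m - 1‖ := by
    rw [hfinal]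
    have : (0:ℝ) < ((p : ℝ)⁻¹) ^ k := pow_pos (inv_pos.mpr (by exact_mod_cast (Fact.out : p.Prime).pos)) k
    exact mul_pos hd0 this
  intro hcon
  rw [hcon, sub_self, norm_zero] at hpos
  exact lt_irrefl _ hpos

end NormLemmas

section QAlgebra
variable {K : Type*} [Field K] (Q : K) (hQ1 : (1 : K) - Q ≠ 0)
  (hpow : ∀ m : ℕ, 1 ≤ m → Q ^ m ≠ 1)

include hQ1 hpow in
lemma qnum_ne_zero {m : ℕ} (hm : 1 ≤ m) : qnum Q m ≠ 0 := by
  unfold qnum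
  exact div_ne_zero (sub_ne_zero.mpr fun h => hpow m hm h.symm) hQ1

include hQ1 hpow in
lemma qfact_ne_zero (m : ℕ) : qfact Q m ≠ 0 := by
  unfold qfact
  exact Finset.prod_ne_zero_iff.mpr fun j _ => qnum_ne_zero Q hQ1 hpow (by omega)

lemma qfact_succ (m : ℕ) : qfact Q (m + 1) = qfact Q m * qnum Q (m + 1) :=
  Finset.prod_range_succ _ _

include hQ1 in
lemma qnum_add (a b : ℕ) : qnum Q (a + b) = qnum Q a + Q ^ a * qnum Q b := by
  unfold qnum
  rw [pow_add]
  field_simp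
  ring

include hQ1 hpow in
lemma qbinom_pascal (n k : ℕ) :
    qbinom Q (n + k + 2) (n + 1) =
      qbinom Q (n + k + 1) (n + 1) + Q ^ (k + 1) * qbinom Q (n + k + 1) n := by
  unfold qbinom
  rw [if_pos (by omega : n + 1 ≤ n + k + 2), if_pos (by omega : n + 1 ≤ n + k + 1),
    if_pos (by omega : n ≤ n + k + 1)]
  rw [show n + k + 2 - (n + 1) = k + 1 from by omega,
    show n + k + 1 - (n + 1) = k from by omega,
    show n + k + 1 - n = k + 1 from by omega]
  have hnum : qnum Q (n + k + 2) = qnum Q (k + 1) + Q ^ (k + 1) * qnum Q (n + 1) := by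
    have := qnum_add Q hQ1 (k + 1) (n + 1)
    rw [show k + 1 + (n + 1) = n + k + 2 from by omega] at this
    exact this
  rw [show n + k + 2 = (n + k + 1) + 1 from by omega, qfact_succ,
    show (n + k + 1) + 1 = n + k + 2 from by omega, hnum,
    qfact_succ Q k, qfact_succ Q n]
  have h1 := qfact_ne_zero Q hQ1 hpow n
  have h2 := qfact_ne_zero Q hQ1 hpow k
  have h3 := qnum_ne_zero Q hQ1 hpow (show 1 ≤ n + 1 by omega)
  have h4 := qnum_ne_zero Q hQ1 hpow (show 1 ≤ k + 1 by omega)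
  field_simp

include hQ1 hpow in
lemma qbinom_self (m : ℕ) : qbinom Q m m = 1 := by
  unfold qbinom
  rw [if_pos le_rfl, Nat.sub_self]
  have : qfact Q 0 = 1 := by simp [qfact]
  rw [this, mul_one, div_self (qfact_ne_zero Q hQ1 hpow m)]

include hQ1 hpow in
lemma sum_qbinom (n M : ℕ) :
    ∑ x ∈ range M, Q ^ x * qbinom Q x n = Q ^ n * qbinom Q M (n + 1) := by
  induction M with
  | zero => simp [qbinom]
  | succ M ih =>
    rw [Finset.sum_range_succ, ih]
    rcases lt_trichotomy M n with h | h | h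
    · have e1 : qbinom Q M n = 0 := by unfold qbinom; rw [if_neg (by omega)]
      have e2 : qbinom Q M (n + 1) = 0 := by unfold qbinom; rw [if_neg (by omega)]
      have e3 : qbinom Q (M + 1) (n + 1) = 0 := by unfold qbinom; rw [if_neg (by omega)]
      rw [e1, e2, e3]; ring
    · subst h
      have e2 : qbinom Q M (M + 1) = 0 := by unfold qbinom; rw [if_neg (by omega)]
      rw [e2, qbinom_self Q hQ1 hpow, qbinom_self Q hQ1 hpow]; ring
    · obtain ⟨k, rfl⟩ : ∃ k, M = n + k + 1 := ⟨M - n - 1, by omega⟩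
      rw [show n + k + 1 + 1 = n + k + 2 from by omega, qbinom_pascal Q hQ1 hpow n k]
      rw [pow_add, pow_add]
      ring

lemma qfact_split (M k : ℕ) (h : k ≤ M) :
    qfact Q M = (∏ j ∈ range k, qnum Q (M - j)) * qfact Q (M - k) := by
  induction k with
  | zero => simp
  | succ k ih =>
    rw [ih (by omega), Finset.prod_range_succ,
      show M - k = (M - (k + 1)) + 1 from by omega, qfact_succ,
      show M - (k + 1) + 1 = M - k from by omega]
    ring

include hQ1 hpow in
lemma qbinom_formula (M n : ℕ) (h : n + 1 ≤ M) :
    qbinom Q M (n + 1) =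
      qnum Q M * (∏ j ∈ range n, qnum Q (M - (j + 1))) / qfact Q (n + 1) := by
  unfold qbinom
  rw [if_pos h, qfact_split Q M (n + 1) h, Finset.prod_range_succ']
  rw [show M - 0 = M from by omega]
  have h1 := qfact_ne_zero Q hQ1 hpow (M - (n + 1))
  have h2 := qfact_ne_zero Q hQ1 hpow (n + 1)
  field_simp

end QAlgebra


lemma sum_range_add_one_eq_choose (n : ℕ) :
    ∑ j ∈ Finset.range n, (j + 1) = (n + 1).choose 2 := by
  induction n with
  | zero => simp
  | succ n ih =>
    rw [Finset.sum_range_succ, ih]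
    have h := Nat.choose_succ_succ (n + 1) 1
    simp [Nat.choose_one_right] at h
    omega


open Filter

/-- **Equation (13)** (exponent corrected): the q-Volkenborn integral of the Gaussian
binomial coefficient: the Riemann sums
`(1/[p^N]_q) Σ_{x=0}^{p^N-1} q^x binom(x,n)_q` converge in `ℚ_p` to
`(-1)^n q^n q^{-C(n+1,2)} / [n+1]_q`. -/
theorem qVolkenborn_qbinom
    (p : ℕ) [Fact p.Prime] (q : ℤ_[p]) (hq1 : q ≠ 1)
    (hq : ‖q - 1‖ < (p : ℝ) ^ (-(1 : ℝ) / ((p : ℝ) - 1))) (n : ℕ) :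
    Filter.Tendsto
      (fun N : ℕ => (1 / qnum (q : ℚ_[p]) (p ^ N)) *
        ∑ x ∈ Finset.range (p ^ N), (q : ℚ_[p]) ^ x * qbinom (q : ℚ_[p]) x n)
      Filter.atTop
      (nhds ((-1 : ℚ_[p]) ^ n * (q : ℚ_[p]) ^ n *
        ((q : ℚ_[p]) ^ Nat.choose (n + 1) 2)⁻¹ / qnum (q : ℚ_[p]) (n + 1))) := by
  obtain ⟨hd1, hb2, hb3⟩ := bounds_of_hq q hq
  set Q : ℚ_[p] := (q : ℚ_[p]) with hQdef
  have hQ1K : (1 : ℚ_[p]) - Q ≠ 0 := by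
    rw [sub_ne_zero]
    intro h
    apply hq1
    rw [hQdef] at h
    exact Subtype.coe_injective (show ((q : ℚ_[p]) : ℚ_[p]) = ((1 : ℤ_[p]) : ℚ_[p]) by
      push_cast; exact h.symm)
  have hpowK : ∀ m : ℕ, 1 ≤ m → Q ^ m ≠ 1 := by
    intro m hm hcon
    apply q_pow_ne_one q hq1 hq hm
    rw [hQdef] at hcon
    exact Subtype.coe_injective (show ((q ^ m : ℤ_[p]) : ℚ_[p]) = ((1 : ℤ_[p]) : ℚ_[p]) by
      push_cast; exact hcon)
  have hQ0 : Q ≠ 0 := by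
    intro h
    rw [hQdef] at h
    have hq0 : q = 0 := Subtype.coe_injective (show ((q : ℚ_[p]) : ℚ_[p]) = ((0 : ℤ_[p]) : ℚ_[p]) by
      push_cast; exact h)
    rw [hq0] at hd1
    simp at hd1
  have hppos : (0 : ℝ) < (p : ℝ) := by exact_mod_cast (Fact.out : p.Prime).pos
  have hp1R : (1 : ℝ) < (p : ℝ) := by exact_mod_cast (Fact.out : p.Prime).one_lt
  -- convergence of q^(p^N) to 1
  have ht : Tendsto (fun N : ℕ => Q ^ p ^ N) atTop (nhds 1) := by
    rw [tendsto_iff_norm_sub_tendsto_zero]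
    have heq : (fun N : ℕ => ‖Q ^ p ^ N - (1 : ℚ_[p])‖) =
        fun N => ‖q - 1‖ * ((p : ℝ)⁻¹) ^ N := by
      funext N
      have hc : Q ^ p ^ N - 1 = ((q ^ p ^ N - 1 : ℤ_[p]) : ℚ_[p]) := by push_cast; ring
      rw [hc, PadicInt.padic_norm_e_of_padicInt, norm_pow_pN q hb2 hb3 N]
    rw [heq]
    have h0 : Tendsto (fun N : ℕ => ((p : ℝ)⁻¹) ^ N) atTop (nhds 0) :=
      tendsto_pow_atTop_nhds_zero_of_lt_one (by positivity)
        (by rw [inv_lt_one_iff₀]; right; exact hp1R)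
    simpa using h0.const_mul ‖q - 1‖
  -- eventual identification of the Riemann sums
  have key : ∀ᶠ N in atTop,
      (1 / qnum Q (p ^ N)) * ∑ x ∈ Finset.range (p ^ N), Q ^ x * qbinom Q x n
        = Q ^ n * (∏ j ∈ Finset.range n, (1 - Q ^ p ^ N * (Q ^ (j + 1))⁻¹) / (1 - Q))
            / qfact Q (n + 1) := by
    filter_upwards [Filter.eventually_ge_atTop (n + 1)] with N hN
    have hpN : n + 1 ≤ p ^ N := by
      calc n + 1 ≤ N := hN
        _ ≤ 2 ^ N := (Nat.lt_two_pow_self).le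
        _ ≤ p ^ N := Nat.pow_le_pow_left (Fact.out : p.Prime).two_le N
    rw [sum_qbinom Q hQ1K hpowK n (p ^ N), qbinom_formula Q hQ1K hpowK (p ^ N) n hpN]
    have hcongr : ∀ j ∈ Finset.range n,
        qnum Q (p ^ N - (j + 1)) = (1 - Q ^ p ^ N * (Q ^ (j + 1))⁻¹) / (1 - Q) := by
      intro j hj
      have hj' := Finset.mem_range.mp hj
      unfold qnum
      rw [pow_sub₀ Q hQ0 (by omega : j + 1 ≤ p ^ N)]
    rw [Finset.prod_congr rfl hcongr]
    have hnz : qnum Q (p ^ N) ≠ 0 := qnum_ne_zero Q hQ1K hpowK (le_trans (by omega) hpN)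
    have hfz : qfact Q (n + 1) ≠ 0 := qfact_ne_zero Q hQ1K hpowK (n + 1)
    set P := ∏ j ∈ Finset.range n, (1 - Q ^ p ^ N * (Q ^ (j + 1))⁻¹) / (1 - Q) with hP
    field_simp
  -- limit of the right-hand side
  have hlim : Tendsto
      (fun N : ℕ => Q ^ n * (∏ j ∈ Finset.range n, (1 - Q ^ p ^ N * (Q ^ (j + 1))⁻¹) / (1 - Q))
          / qfact Q (n + 1)) atTop
      (nhds (Q ^ n * (∏ j ∈ Finset.range n, (1 - 1 * (Q ^ (j + 1))⁻¹) / (1 - Q))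
          / qfact Q (n + 1))) := by
    apply Tendsto.div_const
    apply Tendsto.const_mul
    apply tendsto_finset_prod
    intro j _
    exact (tendsto_const_nhds.sub (ht.mul_const _)).div_const _
  -- identify the limit value
  have hval : Q ^ n * (∏ j ∈ Finset.range n, (1 - 1 * (Q ^ (j + 1))⁻¹) / (1 - Q))
      / qfact Q (n + 1)
      = (-1 : ℚ_[p]) ^ n * Q ^ n * (Q ^ Nat.choose (n + 1) 2)⁻¹ / qnum Q (n + 1) := by
    have hfac : ∀ j ∈ Finset.range n,
        (1 - 1 * (Q ^ (j + 1))⁻¹) / (1 - Q) = (-(Q ^ (j + 1))⁻¹) * qnum Q (j + 1) := by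
      intro j _
      unfold qnum
      have hz : Q ^ (j + 1) ≠ 0 := pow_ne_zero _ hQ0
      field_simp
      ring
    rw [Finset.prod_congr rfl hfac, Finset.prod_mul_distrib]
    have h1 : ∏ j ∈ Finset.range n, (-(Q ^ (j + 1))⁻¹)
        = (-1 : ℚ_[p]) ^ n * (Q ^ Nat.choose (n + 1) 2)⁻¹ := by
      have : ∀ j ∈ Finset.range n, (-(Q ^ (j + 1))⁻¹) = (-1 : ℚ_[p]) * (Q ^ (j + 1))⁻¹ := by
        intro j _; ring
      rw [Finset.prod_congr rfl this, Finset.prod_mul_distrib, Finset.prod_const,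
        Finset.card_range, Finset.prod_inv_distrib, Finset.prod_pow_eq_pow_sum,
        sum_range_add_one_eq_choose]
    have h2 : ∏ j ∈ Finset.range n, qnum Q (j + 1) = qfact Q n := rfl
    rw [h1, h2, qfact_succ]
    have hfz : qfact Q n ≠ 0 := qfact_ne_zero Q hQ1K hpowK n
    have hnz : qnum Q (n + 1) ≠ 0 := qnum_ne_zero Q hQ1K hpowK (by omega)
    field_simp
  rw [hval] at hlim
  exact hlim.congr' (key.mono fun N h => h.symm)
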